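/- Let the 3×3 eigenvalue problem for simple shear be: (α/b+1)Γ₁₁ + (K/b)Γ₁₂ = Γ, (α/b+1)Γ₁₂ + (K/2b)Γ₂₂ = 0, (α/b+1)Γ₁₃ + (K/2b)Γ₂₃ = 0, (α/b+1)Γ₂₂ = Γ, (α/b+1)Γ₂₃ = 0, (α/b+1)Γ₃₃ = Γ, where Γ = (Γ₁₁+Γ₂₂+Γ₃₃)/3 and Γ symmetric. Then the set of α ∈ ℂ for which a nonzero symmetric Γ exists equals { −b, b(λ₁−1), b(λ₂−1), b(λ₃−1) }, where λ₁, λ₂, λ₃ are the roots of λ³ = λ² + K²/(6b²). -/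

import Mathlib

/-- The simple-shear moment eigenvalue system for a symmetric `Γ`. -/
def ShearSystem (b K : ℝ) (α : ℂ) (Γ : Matrix (Fin 3) (Fin 3) ℂ) : Prop :=
  letI Γbar : ℂ := (Γ 0 0 + Γ 1 1 + Γ 2 2) / 3
  (α / b + 1) * Γ 0 0 + (K / b) * Γ 0 1 = Γbar ∧
  (α / b + 1) * Γ 0 1 + (K / (2 * b)) * Γ 1 1 = 0 ∧
  (α / b + 1) * Γ 0 2 + (K / (2 * b)) * Γ 1 2 = 0 ∧
  (α / b + 1) * Γ 1 1 = Γbar ∧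
  (α / b + 1) * Γ 1 2 = 0 ∧
  (α / b + 1) * Γ 2 2 = Γbar

/-- Algebraic core of the forward direction. -/
lemma shear_core (b K e G : ℂ) (he0 : e ≠ 0)
    (g00 g01 g02 g11 g12 g22 : ℂ)
    (hG : 3 * G = g00 + g11 + g22)
    (h1 : e * g00 + K / b * g01 = G)
    (h2 : e * g01 + K / (2 * b) * g11 = 0)
    (h3 : e * g02 + K / (2 * b) * g12 = 0)
    (h4 : e * g11 = G)
    (h5 : e * g12 = 0)
    (h6 : e * g22 = G)
    (hne : ¬(g00 = 0 ∧ g01 = 0 ∧ g02 = 0 ∧ g11 = 0 ∧ g12 = 0 ∧ g22 = 0))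
    (hb0 : b ≠ 0) :
    e ^ 3 = e ^ 2 + K ^ 2 / (6 * b ^ 2) := by
  have h12 : g12 = 0 := (mul_eq_zero.mp h5).resolve_left he0
  have h02 : g02 = 0 := by
    have : e * g02 = 0 := by rw [h12] at h3; linear_combination h3
    exact (mul_eq_zero.mp this).resolve_left he0
  by_cases hG0 : G = 0
  · exfalso
    have h11 : g11 = 0 := (mul_eq_zero.mp (hG0 ▸ h4)).resolve_left he0
    have h22 : g22 = 0 := (mul_eq_zero.mp (hG0 ▸ h6)).resolve_left he0
    have h01 : g01 = 0 := by
      have : e * g01 = 0 := by rw [h11] at h2; linear_combination h2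
      exact (mul_eq_zero.mp this).resolve_left he0
    have h00 : g00 = 0 := by
      have : e * g00 = 0 := by
        rw [h01, hG0] at h1; linear_combination h1
      exact (mul_eq_zero.mp this).resolve_left he0
    exact hne ⟨h00, h01, h02, h11, h12, h22⟩
  · have e01 : e * (e * g01) = -(K / (2 * b)) * G := by
      linear_combination e * h2 - K / (2 * b) * h4
    have e00 : e * (e * (e * g00)) = e ^ 2 * G + K / b * (K / (2 * b) * G) := by
      linear_combination e ^ 2 * h1 - K / b * e01
    have key : G * (6 * b ^ 2 * e ^ 3 - 6 * b ^ 2 * e ^ 2 - K ^ 2) = 0 := by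
      field_simp at e00
      linear_combination e00 + 2 * b ^ 2 * e ^ 2 * h4 + 2 * b ^ 2 * e ^ 2 * h6
        + 2 * b ^ 2 * e ^ 3 * hG
    have := (mul_eq_zero.mp key).resolve_left hG0
    field_simp
    linear_combination this

/-- Construction of a nonzero symmetric solution for each root of the cubic. -/
lemma shear_build (b K : ℝ) (hb0 : (b:ℂ) ≠ 0) (hK0 : (K:ℂ) ≠ 0) (lam : ℂ)
    (hc : lam ^ 3 = lam ^ 2 + (K:ℂ)^2 / (6 * (b:ℂ)^2)) :
    ∃ Γ : Matrix (Fin 3) (Fin 3) ℂ, Γ ≠ 0 ∧ Γ.IsSymm ∧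
      ShearSystem b K ((b:ℂ) * (lam - 1)) Γ := by
  have hlam0 : lam ≠ 0 := by
    rintro rfl
    have : (K:ℂ)^2 / (6*(b:ℂ)^2) = 0 := by linear_combination -hc
    simp [div_eq_zero_iff, hK0, hb0] at this
  have hc' : 6*(b:ℂ)^2*lam^3 = 6*(b:ℂ)^2*lam^2 + K^2 := by
    field_simp at hc; linear_combination hc
  refine ⟨!![2*(b:ℂ)^2*lam^2+K^2, -K*b*lam, 0; -K*b*lam, 2*b^2*lam^2, 0; 0,0,2*b^2*lam^2], ?_, ?_, ?_⟩
  · intro h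
    have h11 : (2*(b:ℂ)^2*lam^2 : ℂ) = 0 := by
      have := congrFun (congrFun h 1) 1
      simpa using this
    simp [hb0, hlam0] at h11
  · unfold Matrix.IsSymm
    ext i j; fin_cases i <;> fin_cases j <;> rfl
  · have hα : ((b:ℂ)*(lam-1))/b + 1 = lam := by field_simp; ring
    refine ⟨?_, ?_, ?_, ?_, ?_, ?_⟩ <;>
      simp only [hα, Matrix.of_apply, Matrix.cons_val', Matrix.cons_val_zero, Matrix.cons_val_one,
        Matrix.head_cons, Matrix.empty_val', Matrix.cons_val_fin_one, Matrix.head_fin_const,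
        Matrix.cons_val_two, Matrix.tail_cons]
    · field_simp
      linear_combination hc'
    · field_simp
      ring
    · field_simp
      ring
    · field_simp
      linear_combination hc'
    · field_simp
      ring
    · field_simp
      linear_combination hc'

/-- the eigenvalues of the simple-shear moment system are
`−b` and `b(λᵢ − 1)`, where `λ₁, λ₂, λ₃` are the roots of
`λ³ = λ² + K²/(6b²)`. -/
theorem stmt13 (b K : ℝ) (hb : 0 < b) (hK : K ≠ 0)
    (lam1 lam2 lam3 : ℂ)
    (hroots : ∀ lam : ℂ,
      lam ^ 3 = lam ^ 2 + (K : ℂ) ^ 2 / (6 * (b : ℂ) ^ 2) ↔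
        lam = lam1 ∨ lam = lam2 ∨ lam = lam3) :
    {α : ℂ | ∃ Γ : Matrix (Fin 3) (Fin 3) ℂ, Γ ≠ 0 ∧ Γ.IsSymm ∧
        ShearSystem b K α Γ} =
      {(-b : ℂ), (b : ℂ) * (lam1 - 1), (b : ℂ) * (lam2 - 1), (b : ℂ) * (lam3 - 1)} := by
  have hb0 : (b:ℂ) ≠ 0 := by
    exact_mod_cast (Complex.ofReal_ne_zero).mpr hb.ne'
  have hK0 : (K:ℂ) ≠ 0 := (Complex.ofReal_ne_zero).mpr hK
  ext α
  simp only [Set.mem_setOf_eq, Set.mem_insert_iff, Set.mem_singleton_iff]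
  constructor
  · rintro ⟨Γ, hne, hsym, h1, h2, h3, h4, h5, h6⟩
    by_cases he0 : α / (b:ℂ) + 1 = 0
    · left
      field_simp at he0
      linear_combination he0
    · have hnz : ¬(Γ 0 0 = 0 ∧ Γ 0 1 = 0 ∧ Γ 0 2 = 0 ∧ Γ 1 1 = 0 ∧ Γ 1 2 = 0 ∧
          Γ 2 2 = 0) := by
        rintro ⟨z00, z01, z02, z11, z12, z22⟩
        apply hne
        have hs := fun i j => congrFun (congrFun hsym.eq i) j
        ext i j
        fin_cases i <;> fin_cases j <;>
          simp only [Matrix.zero_apply] <;>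
          first
            | assumption
            | (rw [show (Γ _ _ : ℂ) = Γ _ _ from (hs _ _)]; assumption)
      have hcubic := shear_core (b:ℂ) (K:ℂ) (α/(b:ℂ)+1) ((Γ 0 0 + Γ 1 1 + Γ 2 2)/3)
        he0 (Γ 0 0) (Γ 0 1) (Γ 0 2) (Γ 1 1) (Γ 1 2) (Γ 2 2)
        (by ring) h1 h2 h3 h4 h5 h6 hnz hb0
      have halpha : ∀ lam : ℂ, α / (b:ℂ) + 1 = lam → α = (b:ℂ) * (lam - 1) := by
        intro lam hl
        field_simp at hl
        linear_combination hl
      rcases (hroots _).mp hcubic with h | h | h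
      · exact Or.inr (Or.inl (halpha _ h))
      · exact Or.inr (Or.inr (Or.inl (halpha _ h)))
      · exact Or.inr (Or.inr (Or.inr (halpha _ h)))
  · rintro (rfl | rfl | rfl | rfl)
    · refine ⟨!![0,0,1;0,0,0;1,0,0], ?_, ?_, ?_⟩
      · intro h
        have := congrFun (congrFun h 0) 2
        simpa using this
      · unfold Matrix.IsSymm
        ext i j; fin_cases i <;> fin_cases j <;> rfl
      · have hα : (-(b:ℂ))/b + 1 = 0 := by field_simp; ring
        refine ⟨?_, ?_, ?_, ?_, ?_, ?_⟩ <;>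
          simp [hα, Matrix.vecHead, Matrix.vecTail]
    · exact shear_build b K hb0 hK0 lam1 ((hroots lam1).mpr (Or.inl rfl))
    · exact shear_build b K hb0 hK0 lam2 ((hroots lam2).mpr (Or.inr (Or.inl rfl)))
    · exact shear_build b K hb0 hK0 lam3 ((hroots lam3).mpr (Or.inr (Or.inr rfl)))
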